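/- Let γ : ℕ → ℂ with associated polynomials P_n(x) = Σ_{k=0}^n (γ_k/k!) D^k[x^n] for n ≥ 0. Then {P_n}_{n=0}^∞ is an orthogonal polynomial sequence if and only if there exist α, β, γ_0' ∈ ℂ with α ≠ 0 and γ_0' ≠ 0 such that for every k ≥ 0, γ_k equals the k-th derivative at 0 of the entire function z ↦ γ_0' · exp(−(α/2)z² − βz) (in particular γ_0 = γ_0'). -/

import Mathlib

open Polynomial Finset

noncomputable def Pg (γ : ℕ → ℂ) (n : ℕ) : Polynomial ℂ :=
  ∑ k ∈ Finset.range (n + 1),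
    Polynomial.C (γ k / (k.factorial : ℂ)) * Polynomial.derivative^[k] (Polynomial.X ^ n)

theorem Pg_eq (γ : ℕ → ℂ) (n : ℕ) :
    Pg γ n = ∑ j ∈ Finset.range (n + 1), C (γ (n - j) * (n.choose j : ℂ)) * X ^ j := by
  rw [Pg, ← Finset.sum_range_reflect]
  refine Finset.sum_congr rfl fun k hk => ?_
  rw [Finset.mem_range, Nat.lt_succ_iff] at hk
  rw [iterate_derivative_X_pow_eq_C_mul]
  have h0 : n + 1 - 1 - k = n - k := by omega
  have h1 : n - (n - k) = k := Nat.sub_sub_self hk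
  rw [h0, h1, ← mul_assoc, ← C_mul]
  congr 2
  rw [Nat.descFactorial_eq_factorial_mul_choose, Nat.cast_mul]
  field_simp
  rw [mul_div_right_comm, mul_div_assoc,
    div_self (by exact_mod_cast (n-k).factorial_ne_zero : ((n-k).factorial : ℂ) ≠ 0), mul_one,
    Nat.choose_symm hk]

theorem Pg_coeff (γ : ℕ → ℂ) (n j : ℕ) :
    (Pg γ n).coeff j = if j ≤ n then γ (n - j) * (n.choose j : ℂ) else 0 := by
  rw [Pg_eq, finset_sum_coeff]
  simp only [coeff_C_mul, coeff_X_pow]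
  rw [Finset.sum_eq_single j]
  · by_cases h : j ≤ n
    · simp [h]
    · simp [h, Nat.choose_eq_zero_of_lt (Nat.lt_of_not_le h)]
  · intro b _ hb; simp [Ne.symm hb]
  · intro h; rw [Finset.mem_range, Nat.lt_succ_iff] at h; push_neg at h
    simp [Nat.choose_eq_zero_of_lt h]


theorem Pg_pascal (γ : ℕ → ℂ) (n : ℕ) :
    Pg γ (n + 1) = X * Pg γ n + Pg (fun k => γ (k + 1)) n := by
  ext j
  rw [coeff_add, Pg_coeff, Pg_coeff]
  rcases Nat.eq_zero_or_pos j with rfl | hj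
  · rw [coeff_X_mul_zero]; simp [Pg_coeff]
  · obtain ⟨i, rfl⟩ : ∃ i, j = i + 1 := ⟨j - 1, by omega⟩
    rw [coeff_X_mul, Pg_coeff]
    by_cases h : i + 1 ≤ n + 1
    · have h2 : i ≤ n := by omega
      simp only [h, h2, if_true]
      have e1 : n + 1 - (i + 1) = n - i := by omega
      rw [e1]
      by_cases h3 : i + 1 ≤ n
      · have e2 : n - (i + 1) + 1 = n - i := by omega
        simp only [h3, if_true, e2]
        push_cast [Nat.choose_succ_succ']
        ring
      · -- i = n
        have hi : i = n := by omega
        subst hi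
        simp only [h3, if_false, add_zero]
        simp [Nat.sub_self]
    · have h2 : ¬ i ≤ n := by omega
      have h3 : ¬ i + 1 ≤ n := by omega
      simp [h, h2, h3]

theorem Pg_deriv (γ : ℕ → ℂ) (n : ℕ) :
    derivative (Pg γ (n + 1)) = C ((n : ℂ) + 1) * Pg γ n := by
  ext j
  rw [coeff_derivative, coeff_C_mul, Pg_coeff, Pg_coeff]
  by_cases h : j ≤ n
  · have h1 : j + 1 ≤ n + 1 := by omega
    simp only [h, h1, if_true]
    have e1 : n + 1 - (j + 1) = n - j := by omega
    rw [e1]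
    have : ((n+1).choose (j+1) : ℂ) * (j + 1) = ((n:ℂ)+1) * (n.choose j) := by
      have := Nat.add_one_mul_choose_eq n j
      have : ((n+1) * n.choose j : ℕ) = ((n+1).choose (j+1)) * (j+1) := by
        simpa [Nat.succ_eq_add_one] using Nat.add_one_mul_choose_eq n j
      calc ((n+1).choose (j+1) : ℂ) * ((j:ℂ) + 1) = (((n+1).choose (j+1)) * (j+1) : ℕ) := by
            push_cast; ring
        _ = (((n+1) * n.choose j : ℕ) : ℂ) := by rw [← this]
        _ = ((n:ℂ)+1) * (n.choose j) := by push_cast; ring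
    rw [mul_assoc, this]; ring
  · have h1 : ¬ j + 1 ≤ n + 1 := by omega
    simp [h, h1]

theorem Pg_degree (γ : ℕ → ℂ) (h : γ 0 ≠ 0) (n : ℕ) : (Pg γ n).degree = n := by
  have hle : (Pg γ n).degree ≤ n := by
    refine degree_le_iff_coeff_zero _ _ |>.mpr fun m hm => ?_
    rw [Pg_coeff]
    have : ¬ m ≤ n := by
      intro hc; rw [Nat.cast_lt] at hm; omega
    simp [this]
  have hne : (Pg γ n).coeff n ≠ 0 := by
    rw [Pg_coeff]; simp [h]
  exact le_antisymm hle (le_degree_of_ne_zero hne)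

theorem Pg_coeff_zero (γ : ℕ → ℂ) (n : ℕ) : (Pg γ n).coeff 0 = γ n := by
  rw [Pg_coeff]; simp

section analytic
variable (α β γ₀' : ℂ)

noncomputable def fgen (α β γ₀' : ℂ) : ℂ → ℂ :=
  fun z => γ₀' * Complex.exp (-(α / 2) * z ^ 2 - β * z)

theorem fgen_contDiff : ContDiff ℂ ⊤ (fgen α β γ₀') := by
  exact contDiff_const.mul
    (((contDiff_const.mul (contDiff_id.pow 2)).sub (contDiff_const.mul contDiff_id)).cexp)

theorem fgen_hasDerivAt (z : ℂ) :
    HasDerivAt (fgen α β γ₀') ((-β - α * z) * fgen α β γ₀' z) z := by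
  have h1 : HasDerivAt (fun z : ℂ => -(α / 2) * z ^ 2 - β * z)
      (-(α / 2) * (2 * z ^ 1) - β * 1) z :=
    ((hasDerivAt_pow 2 z).const_mul (-(α / 2))).sub ((hasDerivAt_id z).const_mul β)
  have h2 := (h1.cexp).const_mul γ₀'
  have e : (-β - α * z) * fgen α β γ₀' z = γ₀' * (Complex.exp (-(α / 2) * z ^ 2 - β * z) *
      (-(α / 2) * (2 * z ^ 1) - β * 1)) := by
    unfold fgen
    ring
  rw [e]
  exact h2

theorem fgen_deriv : deriv (fgen α β γ₀') = fun z => (-β - α * z) * fgen α β γ₀' z := by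
  funext z
  exact (fgen_hasDerivAt α β γ₀' z).deriv

theorem fgen_iter (k : ℕ) :
    iteratedDeriv (k + 1) (fgen α β γ₀') = fun z =>
      (-β - α * z) * iteratedDeriv k (fgen α β γ₀') z
        - α * k * iteratedDeriv (k - 1) (fgen α β γ₀') z := by
  have hd : ∀ j : ℕ, Differentiable ℂ (iteratedDeriv j (fgen α β γ₀')) := fun j =>
    (fgen_contDiff α β γ₀').differentiable_iteratedDeriv j (by simp)
  induction k with
  | zero =>
    rw [iteratedDeriv_one, fgen_deriv]
    funext z
    simp [iteratedDeriv_zero]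
  | succ k ih =>
    funext z
    rw [iteratedDeriv_succ]
    conv_lhs => rw [ih]
    have hk1 : HasDerivAt (fun z : ℂ => -β - α * z) (-α) z := by
      exact ((hasDerivAt_const z (-β)).sub ((hasDerivAt_id z).const_mul α)).congr_deriv (by simp)
    have hk2 : HasDerivAt (iteratedDeriv k (fgen α β γ₀'))
        (iteratedDeriv (k + 1) (fgen α β γ₀') z) z := by
      rw [iteratedDeriv_succ]; exact ((hd k) z).hasDerivAt
    have hk3 : HasDerivAt (iteratedDeriv (k - 1) (fgen α β γ₀'))
        (iteratedDeriv (k - 1 + 1) (fgen α β γ₀') z) z := by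
      rw [iteratedDeriv_succ]; exact ((hd (k - 1)) z).hasDerivAt
    have hder := (hk1.mul hk2).sub (hk3.const_mul (α * (k : ℂ)))
    rw [(show HasDerivAt (fun z => (-β - α * z) * iteratedDeriv k (fgen α β γ₀') z
        - α * (k : ℂ) * iteratedDeriv (k - 1) (fgen α β γ₀') z) _ z from hder).deriv]
    rcases Nat.eq_zero_or_pos k with rfl | hk
    · simp; ring
    · have e1 : k - 1 + 1 = k := by omega
      have e2 : k + 1 - 1 = k := by omega
      rw [e1, e2]
      push_cast
      ring

end analytic

noncomputable def mu (γ : ℕ → ℂ) : ℕ → ℂ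
  | 0 => 1
  | (n+1) => -(γ 0)⁻¹ * ∑ j ∈ (Finset.range (n+1)).attach,
      γ (n+1-j.1) * ((n+1).choose j.1 : ℂ) * mu γ j.1
  decreasing_by exact Finset.mem_range.mp j.2

noncomputable def Lm (γ : ℕ → ℂ) : Polynomial ℂ →ₗ[ℂ] ℂ where
  toFun p := p.sum (fun j a => a * mu γ j)
  map_add' p q := Polynomial.sum_add_index p q _ (fun i => zero_mul _)
    (fun a b₁ b₂ => add_mul _ _ _)
  map_smul' c p := by
    simp only [RingHom.id_apply, smul_eq_mul]
    rw [Polynomial.sum_smul_index p c (fun j a => a * mu γ j) (fun i => zero_mul _), Polynomial.sum_def,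
      Polynomial.sum_def, Finset.mul_sum]
    exact Finset.sum_congr rfl fun i _ => by ring

theorem Lm_monomial (γ : ℕ → ℂ) (a : ℂ) (j : ℕ) : Lm γ (C a * X ^ j) = a * mu γ j := by
  show (C a * X ^ j).sum (fun j a => a * mu γ j) = a * mu γ j
  rw [← smul_eq_C_mul, Polynomial.smul_X_eq_monomial]
  exact Polynomial.sum_monomial_index a (fun j a => a * mu γ j) (zero_mul _)

theorem Pg_zero (γ : ℕ → ℂ) : Pg γ 0 = C (γ 0) := by
  rw [Pg_eq]; simp

theorem Lm_Pg_zero (γ : ℕ → ℂ) : Lm γ (Pg γ 0) = γ 0 := by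
  rw [Pg_zero]
  have := Lm_monomial γ (γ 0) 0
  simpa [mu] using this

theorem Lm_Pg (γ : ℕ → ℂ) (hγ : γ 0 ≠ 0) (m : ℕ) : Lm γ (Pg γ (m + 1)) = 0 := by
  rw [Pg_eq, map_sum]
  have h1 : ∀ j ∈ Finset.range (m + 2),
      Lm γ (C (γ (m + 1 - j) * ((m + 1).choose j : ℂ)) * X ^ j)
        = γ (m + 1 - j) * ((m + 1).choose j : ℂ) * mu γ j := fun j _ => Lm_monomial γ _ j
  rw [Finset.sum_congr rfl h1, Finset.sum_range_succ]
  have hmu : mu γ (m + 1) = -(γ 0)⁻¹ * ∑ j ∈ Finset.range (m + 1),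
      γ (m + 1 - j) * ((m + 1).choose j : ℂ) * mu γ j := by
    rw [mu]
    congr 1
    exact Finset.sum_attach (Finset.range (m + 1))
      (fun j => γ (m + 1 - j) * ((m + 1).choose j : ℂ) * mu γ j)
  rw [hmu]
  simp only [Nat.sub_self, Nat.choose_self, Nat.cast_one, mul_one]
  field_simp
  ring

theorem nat_id (n j : ℕ) : (n - j) * n.choose j = n * (n - 1).choose j := by
  rcases Nat.eq_zero_or_pos n with rfl | hn
  · simp
  · by_cases hj : j ≤ n - 1
    · obtain ⟨m, rfl⟩ : ∃ m, n = m + 1 := ⟨n - 1, by omega⟩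
      simp only [Nat.add_sub_cancel] at *
      calc (m + 1 - j) * (m + 1).choose j = (m + 1).choose j * (m + 1 - j) := Nat.mul_comm _ _
        _ = (m + 1).choose (j + 1) * (j + 1) := (Nat.choose_succ_right_eq (m + 1) j).symm
        _ = (m + 1) * m.choose j := by
            simpa [Nat.succ_eq_add_one] using (Nat.add_one_mul_choose_eq m j).symm
    · have h1 : (n - 1).choose j = 0 := Nat.choose_eq_zero_of_lt (by omega)
      have h2 : n - j = 0 := by omega
      rw [h1, h2, Nat.mul_zero, Nat.zero_mul]

theorem Pg_shift (γ : ℕ → ℂ) (α β : ℂ)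
    (hrec : ∀ k : ℕ, γ (k + 1) = -β * γ k - α * (k : ℂ) * γ (k - 1)) (n : ℕ) :
    Pg (fun k => γ (k + 1)) n = -(C β) * Pg γ n - C α * C (n : ℂ) * Pg γ (n - 1) := by
  ext j
  rw [coeff_sub, neg_mul, coeff_neg, coeff_C_mul, mul_assoc, coeff_C_mul, coeff_C_mul,
    Pg_coeff, Pg_coeff, Pg_coeff]
  by_cases h : j ≤ n
  · simp only [h, if_true]
    rw [hrec (n - j)]
    by_cases h2 : j ≤ n - 1
    · rw [if_pos h2]
      have e1 : n - j - 1 = n - 1 - j := by omega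
      have key : ((n - j : ℕ) : ℂ) * ((n.choose j : ℕ) : ℂ)
          = (n : ℂ) * (((n - 1).choose j : ℕ) : ℂ) := by
        exact_mod_cast congrArg (fun t : ℕ => (t : ℂ)) (nat_id n j)
      rw [e1]
      linear_combination (-α * γ (n - 1 - j)) * key
    · rw [if_neg h2]
      have hjn : j = n := by omega
      subst hjn
      rw [Nat.sub_self]
      push_cast
      ring
  · simp [h, show ¬ j ≤ n - 1 by omega]

theorem Pg_rec (γ : ℕ → ℂ) (α β : ℂ)
    (hrec : ∀ k : ℕ, γ (k + 1) = -β * γ k - α * (k : ℂ) * γ (k - 1)) (n : ℕ) :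
    Pg γ (n + 1) = (X - C β) * Pg γ n - C α * C (n : ℂ) * Pg γ (n - 1) := by
  rw [Pg_pascal, Pg_shift γ α β hrec n]
  ring

theorem Lm_C_mul (γ : ℕ → ℂ) (c : ℂ) (p : Polynomial ℂ) : Lm γ (C c * p) = c * Lm γ p := by
  rw [← smul_eq_C_mul, map_smul, smul_eq_mul]

theorem Lkey (γ : ℕ → ℂ) (α β : ℂ) (hγ : γ 0 ≠ 0)
    (hrec : ∀ k : ℕ, γ (k + 1) = -β * γ k - α * (k : ℂ) * γ (k - 1)) :
    ∀ m : ℕ, (∀ n : ℕ, m < n → Lm γ (X ^ m * Pg γ n) = 0) ∧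
      (Lm γ (X ^ m * Pg γ m) = γ 0 * α ^ m * (m.factorial : ℂ)) := by
  have hXP : ∀ n : ℕ, X * Pg γ n
      = Pg γ (n + 1) + C β * Pg γ n + C α * C (n : ℂ) * Pg γ (n - 1) := by
    intro n
    rw [Pg_rec γ α β hrec n]
    ring
  intro m
  induction m with
  | zero =>
    constructor
    · intro n hn
      obtain ⟨k, rfl⟩ : ∃ k, n = k + 1 := ⟨n - 1, by omega⟩
      rw [pow_zero, one_mul]
      exact Lm_Pg γ hγ k
    · rw [pow_zero, one_mul, Lm_Pg_zero]
      simp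
  | succ m ih =>
    have key : ∀ n : ℕ, Lm γ (X ^ (m + 1) * Pg γ n)
        = Lm γ (X ^ m * Pg γ (n + 1)) + β * Lm γ (X ^ m * Pg γ n)
          + α * (n : ℂ) * Lm γ (X ^ m * Pg γ (n - 1)) := by
      intro n
      have hsplit : X ^ (m + 1) * Pg γ n
          = X ^ m * Pg γ (n + 1) + C β * (X ^ m * Pg γ n)
            + C (α * (n : ℂ)) * (X ^ m * Pg γ (n - 1)) := by
        rw [pow_succ, mul_assoc, hXP n, C_mul]
        ring
      rw [hsplit, map_add, map_add, Lm_C_mul, Lm_C_mul]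
    constructor
    · intro n hn
      rw [key n, ih.1 (n + 1) (by omega), ih.1 n (by omega), ih.1 (n - 1) (by omega)]
      ring
    · rw [key (m + 1), ih.1 (m + 2) (by omega), ih.1 (m + 1) (by omega),
        Nat.add_sub_cancel, ih.2]
      rw [Nat.factorial_succ]
      push_cast
      ring

theorem Lm_orth (γ : ℕ → ℂ) (α β : ℂ) (hγ : γ 0 ≠ 0)
    (hrec : ∀ k : ℕ, γ (k + 1) = -β * γ k - α * (k : ℂ) * γ (k - 1))
    (m n : ℕ) (hmn : m < n) : Lm γ (Pg γ m * Pg γ n) = 0 := by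
  nth_rewrite 1 [Pg_eq]
  rw [Finset.sum_mul, map_sum]
  refine Finset.sum_eq_zero fun j hj => ?_
  rw [mul_assoc, Lm_C_mul, (Lkey γ α β hγ hrec j).1 n
    (by rw [Finset.mem_range] at hj; omega), mul_zero]

theorem Lm_sq (γ : ℕ → ℂ) (α β : ℂ) (hγ : γ 0 ≠ 0)
    (hrec : ∀ k : ℕ, γ (k + 1) = -β * γ k - α * (k : ℂ) * γ (k - 1)) (n : ℕ) :
    Lm γ (Pg γ n * Pg γ n) = γ 0 ^ 2 * α ^ n * (n.factorial : ℂ) := by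
  nth_rewrite 1 [Pg_eq]
  rw [Finset.sum_mul, map_sum]
  rw [Finset.sum_eq_single_of_mem n (Finset.self_mem_range_succ n)]
  · rw [mul_assoc, Lm_C_mul, (Lkey γ α β hγ hrec n).2, Nat.sub_self, Nat.choose_self]
    push_cast
    ring
  · intro j hj hne
    rw [mul_assoc, Lm_C_mul, (Lkey γ α β hγ hrec j).1 n
      (by rw [Finset.mem_range] at hj; omega), mul_zero]

theorem Pg_span (γ : ℕ → ℂ) (hγ : γ 0 ≠ 0) :
    ∀ (n : ℕ) (q : Polynomial ℂ), q.natDegree ≤ n →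
      ∃ c : ℕ → ℂ, q = ∑ k ∈ Finset.range (n + 1), C (c k) * Pg γ k := by
  intro n
  induction n with
  | zero =>
    intro q hq
    refine ⟨fun _ => q.coeff 0 / γ 0, ?_⟩
    rw [eq_C_of_natDegree_le_zero hq]
    rw [Finset.sum_range_one, Pg_zero, ← C_mul]
    congr 1
    field_simp
    simp
  | succ n ih =>
    intro q hq
    set r := q - C (q.coeff (n + 1) / γ 0) * Pg γ (n + 1) with hr
    have hrd : r.natDegree ≤ n := by
      rw [natDegree_le_iff_coeff_eq_zero]
      intro N hN
      rw [hr, coeff_sub, coeff_C_mul, Pg_coeff]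
      by_cases hN2 : N = n + 1
      · subst hN2
        simp only [le_refl, if_true, Nat.sub_self, Nat.choose_self, Nat.cast_one, mul_one]
        field_simp
        simp
      · rw [if_neg (by omega : ¬ N ≤ n + 1), mul_zero, sub_zero]
        exact coeff_eq_zero_of_natDegree_lt (by omega)
    obtain ⟨c, hc⟩ := ih r hrd
    refine ⟨Function.update c (n + 1) (q.coeff (n + 1) / γ 0), ?_⟩
    rw [Finset.sum_range_succ, Function.update_self]
    have he : ∑ k ∈ Finset.range (n + 1),
        C (Function.update c (n + 1) (q.coeff (n + 1) / γ 0) k) * Pg γ k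
        = ∑ k ∈ Finset.range (n + 1), C (c k) * Pg γ k :=
      Finset.sum_congr rfl fun k hk => by
        rw [Function.update_of_ne (by rw [Finset.mem_range] at hk; omega)]
    rw [he, ← hc, hr]
    ring

theorem Pg_deriv' (γ : ℕ → ℂ) (n : ℕ) :
    derivative (Pg γ n) = C (n : ℂ) * Pg γ (n - 1) := by
  cases n with
  | zero => rw [Pg_zero, derivative_C]; simp
  | succ n =>
    rw [Pg_deriv, Nat.add_sub_cancel]
    push_cast
    ring_nf

theorem Pg_ext (γ : ℕ → ℂ) (hγ : γ 0 ≠ 0) (n : ℕ) (hn : 1 ≤ n) (A B A' B' : ℂ)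
    (heq : C A * Pg γ n + C B * Pg γ (n - 1) = C A' * Pg γ n + C B' * Pg γ (n - 1)) :
    A = A' ∧ B = B' := by
  have hco : ∀ j, A * (Pg γ n).coeff j + B * (Pg γ (n - 1)).coeff j
      = A' * (Pg γ n).coeff j + B' * (Pg γ (n - 1)).coeff j := by
    intro j
    have := congrArg (fun p => Polynomial.coeff p j) heq
    simpa [coeff_C_mul] using this
  have h1 := hco n
  rw [Pg_coeff, Pg_coeff, if_pos le_rfl, if_neg (by omega : ¬ n ≤ n - 1)] at h1
  simp only [Nat.sub_self, Nat.choose_self, Nat.cast_one, mul_one, mul_zero, add_zero] at h1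
  have hA : A = A' := mul_right_cancel₀ hγ h1
  refine ⟨hA, ?_⟩
  have h2 := hco (n - 1)
  rw [Pg_coeff, Pg_coeff, if_pos (by omega : n - 1 ≤ n), if_pos le_rfl] at h2
  simp only [Nat.sub_self, Nat.choose_self, Nat.cast_one, mul_one] at h2
  rw [hA] at h2
  have h2' : B * γ 0 = B' * γ 0 := by
    have := add_left_cancel h2
    exact this
  exact mul_right_cancel₀ hγ h2'

theorem fgen_zero (α β γ₀' : ℂ) : fgen α β γ₀' 0 = γ₀' := by
  unfold fgen
  simp

theorem fgen_iter_zero (α β γ₀' : ℂ) (k : ℕ) :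
    iteratedDeriv (k + 1) (fgen α β γ₀') 0
      = -β * iteratedDeriv k (fgen α β γ₀') 0
        - α * (k : ℂ) * iteratedDeriv (k - 1) (fgen α β γ₀') 0 := by
  have := congrFun (fgen_iter α β γ₀' k) 0
  rw [this]
  ring

theorem rec_to_iter (α β γ₀' : ℂ) (γ : ℕ → ℂ) (hγ0 : γ 0 = γ₀')
    (hrec : ∀ k : ℕ, γ (k + 1) = -β * γ k - α * (k : ℂ) * γ (k - 1)) :
    ∀ k : ℕ, γ k = iteratedDeriv k (fgen α β γ₀') 0 := by
  intro k
  induction k using Nat.strong_induction_on with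
  | _ k ih =>
    match k with
    | 0 => rw [iteratedDeriv_zero, fgen_zero, hγ0]
    | (k + 1) =>
      rw [hrec k, fgen_iter_zero, ih k (by omega), ih (k - 1) (by omega)]

theorem iter_to_rec (α β γ₀' : ℂ) (γ : ℕ → ℂ)
    (hiter : ∀ k : ℕ, γ k = iteratedDeriv k (fgen α β γ₀') 0) :
    γ 0 = γ₀' ∧ ∀ k : ℕ, γ (k + 1) = -β * γ k - α * (k : ℂ) * γ (k - 1) := by
  constructor
  · rw [hiter 0, iteratedDeriv_zero, fgen_zero]
  · intro k
    rw [hiter (k + 1), hiter k, hiter (k - 1), fgen_iter_zero]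

/-- The sequence `P n = ∑_{k=0}^n (γ k / k!) D^k[x^n]` is an orthogonal
polynomial sequence iff the `γ k` are the Taylor coefficients (derivatives at 0) of
`z ↦ γ₀' · exp(-(α/2)z² - βz)` for some `α ≠ 0`, `γ₀' ≠ 0`. -/
theorem stmt_0 (γ : ℕ → ℂ) (P : ℕ → Polynomial ℂ)
    (hP : ∀ n : ℕ, P n = ∑ k ∈ Finset.range (n + 1),
      Polynomial.C (γ k / (k.factorial : ℂ)) * Polynomial.derivative^[k] (Polynomial.X ^ n)) :
    (∃ L : Polynomial ℂ →ₗ[ℂ] ℂ,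
        (∀ n : ℕ, (P n).degree = n) ∧
        (∀ m n : ℕ, m ≠ n → L (P m * P n) = 0) ∧
        (∀ n : ℕ, L (P n ^ 2) ≠ 0)) ↔
    (∃ α β γ₀' : ℂ, α ≠ 0 ∧ γ₀' ≠ 0 ∧
      ∀ k : ℕ, γ k =
        iteratedDeriv k (fun z : ℂ => γ₀' * Complex.exp (-(α / 2) * z ^ 2 - β * z)) 0) := by
  have hPg : ∀ n, P n = Pg γ n := fun n => hP n
  constructor
  · rintro ⟨L, hdeg, horth, hsq⟩
    have hγ0 : γ 0 ≠ 0 := by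
      intro h
      have hd0 := hdeg 0
      rw [hPg 0, Pg_zero, h, map_zero, degree_zero] at hd0
      simp at hd0
    have horth' : ∀ m n : ℕ, m ≠ n → L (Pg γ m * Pg γ n) = 0 := by
      intro m n h; have := horth m n h; rwa [hPg, hPg] at this
    have hsq' : ∀ n, L (Pg γ n * Pg γ n) ≠ 0 := by
      intro n; have := hsq n; rwa [hPg, sq] at this
    have horthd : ∀ (m n : ℕ) (q : Polynomial ℂ), q.natDegree ≤ m → m < n →
        L (q * Pg γ n) = 0 := by
      intro m n q hq hmn
      obtain ⟨c, hc⟩ := Pg_span γ hγ0 m q hq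
      rw [hc, Finset.sum_mul, map_sum]
      refine Finset.sum_eq_zero fun k hk => ?_
      rw [mul_assoc, ← smul_eq_C_mul, map_smul, smul_eq_mul,
        horth' k n (by rw [Finset.mem_range] at hk; omega), mul_zero]
    set Q : ℕ → Polynomial ℂ := fun n => Pg (fun k => γ (k + 1)) n with hQdef
    have hQd : ∀ n, (Q n).natDegree ≤ n := by
      intro n
      rw [natDegree_le_iff_coeff_eq_zero]
      intro N hN
      rw [hQdef]
      simp only
      rw [Pg_coeff, if_neg (by omega)]
    have hQX : ∀ n, X * Pg γ n = Pg γ (n + 1) - Q n := by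
      intro n
      rw [hQdef]
      simp only
      rw [Pg_pascal]
      ring
    have hbl : ∀ n : ℕ, ∃ b l : ℂ, Q n = C b * Pg γ n + C l * Pg γ (n - 1) ∧
        (1 ≤ n → l ≠ 0) ∧ (n = 0 → l = 0) := by
      intro n
      cases n with
      | zero =>
        refine ⟨γ 1 / γ 0, 0, ?_, by omega, fun _ => rfl⟩
        rw [hQdef]
        simp only
        rw [Pg_zero, Pg_zero, C_0, zero_mul, add_zero, ← C_mul]
        congr 1
        field_simp
      | succ m =>
        obtain ⟨c, hc⟩ := Pg_span γ hγ0 (m + 1) (Q (m + 1)) (hQd (m + 1))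
        have hQPk : ∀ k, k < m + 2 → L (Q (m + 1) * Pg γ k) = c k * L (Pg γ k * Pg γ k) := by
          intro k hk
          rw [hc, Finset.sum_mul, map_sum]
          rw [Finset.sum_eq_single_of_mem k (Finset.mem_range.mpr hk)]
          · rw [mul_assoc, ← smul_eq_C_mul, map_smul, smul_eq_mul]
          · intro j hj hne
            rw [mul_assoc, ← smul_eq_C_mul, map_smul, smul_eq_mul, horth' j k hne, mul_zero]
        have hQPval : ∀ k, k < m + 1 → L (Q (m + 1) * Pg γ k)
            = - L (Pg γ (m + 1) * Pg γ (k + 1)) + L (Q k * Pg γ (m + 1)) := by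
          intro k hk
          have e : Q (m + 1) * Pg γ k = Pg γ (m + 2) * Pg γ k
              - Pg γ (m + 1) * Pg γ (k + 1) + Q k * Pg γ (m + 1) := by
            have e1 : Q (m + 1) = Pg γ (m + 2) - X * Pg γ (m + 1) := by
              rw [hQX (m + 1)]; ring
            rw [e1]
            have e2 : X * Pg γ (m + 1) * Pg γ k = X * Pg γ k * Pg γ (m + 1) := by ring
            rw [sub_mul, e2, hQX k]
            ring
          rw [e, map_add, map_sub, horth' (m + 2) k (by omega), zero_sub]
        have hck : ∀ k, k < m → c k = 0 := by
          intro k hk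
          have h1 := hQPk k (by omega)
          have h2 := hQPval k (by omega)
          rw [horth' (m + 1) (k + 1) (by omega), neg_zero, zero_add,
            horthd k (m + 1) (Q k) (hQd k) (by omega)] at h2
          rw [h2] at h1
          rcases mul_eq_zero.mp h1.symm with h | h
          · exact h
          · exact absurd h (hsq' k)
        refine ⟨c (m + 1), c m, ?_, fun _ => ?_, by omega⟩
        · rw [hc, Finset.sum_range_succ, Finset.sum_range_succ]
          rw [Finset.sum_eq_zero fun k hk => by
            rw [hck k (Finset.mem_range.mp hk)]; simp]
          rw [Nat.add_sub_cancel]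
          ring
        · have h1 := hQPk m (by omega)
          have h2 := hQPval m (by omega)
          rw [horthd m (m + 1) (Q m) (hQd m) (by omega), add_zero] at h2
          rw [h2] at h1
          intro hc0
          rw [hc0, zero_mul] at h1
          exact hsq' (m + 1) (neg_eq_zero.mp h1)
    choose b l hQbl hl1 hl0 using hbl
    have hQderiv : ∀ n : ℕ, derivative (Q n) = C (n : ℂ) * Q (n - 1) := by
      intro n
      rw [hQdef]
      simp only
      exact Pg_deriv' _ n
    have hstep : ∀ n : ℕ, C ((n : ℂ) + 1) * (C (b n) * Pg γ n + C (l n) * Pg γ (n - 1))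
        = C (b (n + 1)) * (C ((n : ℂ) + 1) * Pg γ n)
          + C (l (n + 1)) * (C (n : ℂ) * Pg γ (n - 1)) := by
      intro n
      have hd := congrArg derivative (hQbl (n + 1))
      rw [hQderiv (n + 1), Nat.add_sub_cancel, derivative_add, derivative_C_mul,
        derivative_C_mul, Pg_deriv' γ (n + 1), Nat.add_sub_cancel, Pg_deriv' γ n,
        hQbl n] at hd
      have hcast : (((n + 1 : ℕ) : ℂ)) = (n : ℂ) + 1 := by push_cast; ring
      rw [hcast] at hd
      linear_combination hd
    have hext : ∀ n : ℕ, 1 ≤ n → ((n : ℂ) + 1) * b n = ((n : ℂ) + 1) * b (n + 1)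
        ∧ ((n : ℂ) + 1) * l n = (n : ℂ) * l (n + 1) := by
      intro n hn
      apply Pg_ext γ hγ0 n hn
      rw [C_mul, C_mul, C_mul, C_mul]
      linear_combination hstep n
    have hb10 : b 1 = b 0 := by
      have hd := hstep 0
      rw [hl0 0 rfl] at hd
      rw [Pg_zero] at hd
      have hco := congrArg (fun p => Polynomial.coeff p 0) hd
      simp only [coeff_C_mul, coeff_add, coeff_C, Nat.cast_zero] at hco
      simp at hco
      rcases hco with h | h
      · exact h.symm
      · exact absurd h hγ0
    have hbc : ∀ n, b n = b 0 := by
      intro n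
      induction n with
      | zero => rfl
      | succ n ih =>
        rcases Nat.eq_zero_or_pos n with rfl | hn
        · exact hb10
        · have h := (hext n hn).1
          have hne : ((n : ℂ) + 1) ≠ 0 := Nat.cast_add_one_ne_zero n
          rw [← mul_left_cancel₀ hne h, ih]
    have hl1' : l 1 ≠ 0 := hl1 1 le_rfl
    have hlc : ∀ n, 1 ≤ n → l n = (n : ℂ) * l 1 := by
      intro n
      induction n with
      | zero => omega
      | succ n ih =>
        intro _
        rcases Nat.eq_zero_or_pos n with rfl | hn
        · simp
        · have h := (hext n hn).2
          rw [ih hn] at h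
          have hne : (n : ℂ) ≠ 0 := by
            exact_mod_cast Nat.pos_iff_ne_zero.mp hn
          have hval : l (n + 1) = ((n : ℂ) + 1) * l 1 := by
            apply mul_left_cancel₀ hne
            rw [← h]; ring
          rw [hval]
          push_cast
          ring
    refine ⟨-(l 1), -(b 0), γ 0, neg_ne_zero.mpr hl1', hγ0, ?_⟩
    show ∀ k : ℕ, γ k = iteratedDeriv k (fgen (-(l 1)) (-(b 0)) (γ 0)) 0
    apply rec_to_iter _ _ _ γ rfl
    intro k
    have h1 : γ (k + 1) = (Q k).coeff 0 := by
      rw [hQdef]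
      simp only
      rw [Pg_coeff_zero]
    rw [h1, hQbl k, coeff_add, coeff_C_mul, coeff_C_mul, Pg_coeff_zero, Pg_coeff_zero, hbc k]
    rcases Nat.eq_zero_or_pos k with rfl | hk
    · rw [hl0 0 rfl]
      push_cast
      ring
    · rw [hlc k hk]
      ring
  · rintro ⟨α, β, γ₀', hα, hγ', hiter⟩
    have hiter' : ∀ k : ℕ, γ k = iteratedDeriv k (fgen α β γ₀') 0 := hiter
    obtain ⟨hγ0eq, hrec⟩ := iter_to_rec α β γ₀' γ hiter'
    have hγ0 : γ 0 ≠ 0 := by rw [hγ0eq]; exact hγ'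
    refine ⟨Lm γ, ?_, ?_, ?_⟩
    · intro n
      rw [hPg]
      exact Pg_degree γ hγ0 n
    · intro m n hmn
      rw [hPg, hPg]
      rcases lt_or_gt_of_ne hmn with h | h
      · exact Lm_orth γ α β hγ0 hrec m n h
      · rw [mul_comm]
        exact Lm_orth γ α β hγ0 hrec n m h
    · intro n
      rw [hPg, sq, Lm_sq γ α β hγ0 hrec n]
      exact mul_ne_zero (mul_ne_zero (pow_ne_zero _ hγ0) (pow_ne_zero _ hα))
        (by exact_mod_cast n.factorial_ne_zero)
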